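/- Stability of well-separating hyperplanes: Let T ⊆ ℝⁿ, ρ, ε > 0 with ε ≤ ρ/4, and κ > 0. Let a_1,…,a_m ∈ ℝⁿ, τ_1,…,τ_m, ν_1,…,ν_m ∈ ℝ. For x, z ∈ T, say index i ∈ [m] is κ-well-separating for (x, z) if sign(⟨a_i,x⟩+τ_i+ν_i) ≠ sign(⟨a_i,z⟩+τ_i), |⟨a_i,x⟩+τ_i+ν_i| ≥ κ‖x−z‖₂ and |⟨a_i,z⟩+τ_i| ≥ κ‖x−z‖₂; let I(x,z,κ) be the set of such indices. Then for all x, z, x′, z′ ∈ T with ‖x′−z′‖₂ ≥ ρ, ‖x−x′‖₂ ≤ ε and ‖z−z′‖₂ ≤ ε: |I(x,z,κ/2)| ≥ |I(x′,z′,κ)| − 2·sup_{y ∈ (T−T) ∩ εB₂ⁿ} |{i ∈ [m] : |⟨a_i,y⟩| > κρ/4}|. -/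

import Mathlib

open scoped BigOperators Pointwise

noncomputable def rsign (t : ℝ) : ℝ := if 0 ≤ t then 1 else -1

/-- The set of indices of κ-well-separating hyperplanes for the pair (x, z). -/
noncomputable def sepSet {n m : ℕ} (a : Fin m → EuclideanSpace ℝ (Fin n))
    (τ ν : Fin m → ℝ) (x z : EuclideanSpace ℝ (Fin n)) (κ : ℝ) : Finset (Fin m) :=
  Finset.univ.filter fun i =>
    rsign ((inner ℝ (a i) x : ℝ) + τ i + ν i) ≠ rsign ((inner ℝ (a i) z : ℝ) + τ i) ∧
    κ * ‖x - z‖ ≤ |(inner ℝ (a i) x : ℝ) + τ i + ν i| ∧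
    κ * ‖x - z‖ ≤ |(inner ℝ (a i) z : ℝ) + τ i|

lemma rsign_add_of_abs_lt {u d : ℝ} (h : |d| < |u|) : rsign (u + d) = rsign u := by
  rcases le_or_gt 0 u with hu | hu
  · have : 0 ≤ u + d := by
      rw [abs_of_nonneg hu] at h
      cases abs_lt.mp h; linarith
    simp [rsign, this, hu]
  · have h1 : ¬ (0 ≤ u + d) := by
      rw [abs_of_neg hu] at h
      cases abs_lt.mp h
      push_neg; linarith
    simp [rsign, h1, not_le.mpr hu]

theorem stability_of_well_separating_hyperplanes (n m : ℕ)
    (T : Set (EuclideanSpace ℝ (Fin n))) (ρ ε κ : ℝ)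
    (hρ : 0 < ρ) (hε : 0 < ε) (hερ : ε ≤ ρ / 4) (hκ : 0 < κ)
    (a : Fin m → EuclideanSpace ℝ (Fin n)) (τ ν : Fin m → ℝ)
    (x z x' z' : EuclideanSpace ℝ (Fin n))
    (hx : x ∈ T) (hz : z ∈ T) (hx' : x' ∈ T) (hz' : z' ∈ T)
    (hsep : ρ ≤ ‖x' - z'‖) (hxx : ‖x - x'‖ ≤ ε) (hzz : ‖z - z'‖ ≤ ε) :
    ((sepSet a τ ν x' z' κ).card : ℤ) -
        2 * (⨆ y : {y : EuclideanSpace ℝ (Fin n) //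
                y ∈ (T - T) ∩ Metric.closedBall 0 ε},
              (Finset.univ.filter fun i : Fin m =>
                κ * ρ / 4 < |(inner ℝ (a i) (y : EuclideanSpace ℝ (Fin n)) : ℝ)|).card : ℕ) ≤
      ((sepSet a τ ν x z (κ / 2)).card : ℤ) := by
  set f : {y : EuclideanSpace ℝ (Fin n) // y ∈ (T - T) ∩ Metric.closedBall 0 ε} → ℕ :=
    fun y => (Finset.univ.filter fun i : Fin m =>
      κ * ρ / 4 < |(inner ℝ (a i) (y : EuclideanSpace ℝ (Fin n)) : ℝ)|).card with hf
  have hbdd : BddAbove (Set.range f) := by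
    refine ⟨m, ?_⟩
    rintro _ ⟨y, rfl⟩
    simpa using (Finset.card_filter_le Finset.univ _).trans (by simp)
  set N := ⨆ y, f y with hN
  set Bx := Finset.univ.filter fun i : Fin m =>
    κ * ρ / 4 < |(inner ℝ (a i) (x - x') : ℝ)| with hBx
  set Bz := Finset.univ.filter fun i : Fin m =>
    κ * ρ / 4 < |(inner ℝ (a i) (z - z') : ℝ)| with hBz
  have hBxN : Bx.card ≤ N := by
    have hy : (x - x') ∈ (T - T) ∩ Metric.closedBall 0 ε :=
      ⟨Set.sub_mem_sub hx hx', by simpa [Metric.mem_closedBall, dist_eq_norm] using hxx⟩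
    exact le_ciSup hbdd ⟨x - x', hy⟩
  have hBzN : Bz.card ≤ N := by
    have hy : (z - z') ∈ (T - T) ∩ Metric.closedBall 0 ε :=
      ⟨Set.sub_mem_sub hz hz', by simpa [Metric.mem_closedBall, dist_eq_norm] using hzz⟩
    exact le_ciSup hbdd ⟨z - z', hy⟩
  have hnorm : ‖x - z‖ ≤ ‖x' - z'‖ + 2 * ε := by
    have h1 : ‖x - z‖ ≤ ‖x - x'‖ + ‖x' - z'‖ + ‖z' - z‖ := by
      calc ‖x - z‖ = ‖(x - x') + (x' - z') + (z' - z)‖ := by abel_nf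
        _ ≤ ‖(x - x') + (x' - z')‖ + ‖z' - z‖ := norm_add_le _ _
        _ ≤ ‖x - x'‖ + ‖x' - z'‖ + ‖z' - z‖ := by
            gcongr; exact norm_add_le _ _
    have h2 : ‖z' - z‖ ≤ ε := by rwa [norm_sub_rev]
    linarith
  have hsub : sepSet a τ ν x' z' κ ⊆ sepSet a τ ν x z (κ / 2) ∪ Bx ∪ Bz := by
    intro i hi
    by_cases hix : i ∈ Bx
    · exact Finset.mem_union_left _ (Finset.mem_union_right _ hix)
    by_cases hiz : i ∈ Bz
    · exact Finset.mem_union_right _ hiz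
    refine Finset.mem_union_left _ (Finset.mem_union_left _ ?_)
    simp only [sepSet, Finset.mem_filter, Finset.mem_univ, true_and] at hi ⊢
    obtain ⟨hsgn, hux, huz⟩ := hi
    simp only [hBx, hBz, Finset.mem_filter, Finset.mem_univ, true_and, not_lt] at hix hiz
    have hdx : (inner ℝ (a i) x : ℝ) = (inner ℝ (a i) x' : ℝ) + (inner ℝ (a i) (x - x') : ℝ) := by
      rw [inner_sub_right]; ring
    have hdz : (inner ℝ (a i) z : ℝ) = (inner ℝ (a i) z' : ℝ) + (inner ℝ (a i) (z - z') : ℝ) := by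
      rw [inner_sub_right]; ring
    set u' : ℝ := (inner ℝ (a i) x' : ℝ) + τ i + ν i with hu'
    set v' : ℝ := (inner ℝ (a i) z' : ℝ) + τ i with hv'
    set dx : ℝ := (inner ℝ (a i) (x - x') : ℝ) with hdx'
    set dz : ℝ := (inner ℝ (a i) (z - z') : ℝ) with hdz'
    have heqx : (inner ℝ (a i) x : ℝ) + τ i + ν i = u' + dx := by rw [hdx]; ring
    have heqz : (inner ℝ (a i) z : ℝ) + τ i = v' + dz := by rw [hdz]; ring
    have hρ' : κ * ρ ≤ κ * ‖x' - z'‖ := mul_le_mul_of_nonneg_left hsep hκ.le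
    have hκρ : 0 < κ * ρ := mul_pos hκ hρ
    have hκε : κ * ε ≤ κ * (ρ / 4) := mul_le_mul_of_nonneg_left hερ hκ.le
    have hκn : κ * ‖x - z‖ ≤ κ * (‖x' - z'‖ + 2 * ε) := mul_le_mul_of_nonneg_left hnorm hκ.le
    have habsx : |dx| < |u'| := lt_of_le_of_lt hix (by linarith)
    have habsz : |dz| < |v'| := lt_of_le_of_lt hiz (by linarith)
    refine ⟨?_, ?_, ?_⟩
    · rw [heqx, heqz, rsign_add_of_abs_lt habsx, rsign_add_of_abs_lt habsz]
      exact hsgn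
    · rw [heqx]
      have h1 : |u'| - |dx| ≤ |u' + dx| := by
        have := abs_sub_abs_le_abs_sub u' (-dx)
        simp only [sub_neg_eq_add, abs_neg] at this
        linarith
      linarith
    · rw [heqz]
      have h1 : |v'| - |dz| ≤ |v' + dz| := by
        have := abs_sub_abs_le_abs_sub v' (-dz)
        simp only [sub_neg_eq_add, abs_neg] at this
        linarith
      linarith
  have hcard : (sepSet a τ ν x' z' κ).card ≤
      (sepSet a τ ν x z (κ / 2)).card + Bx.card + Bz.card := by
    calc (sepSet a τ ν x' z' κ).card ≤ (sepSet a τ ν x z (κ / 2) ∪ Bx ∪ Bz).card :=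
          Finset.card_le_card hsub
      _ ≤ (sepSet a τ ν x z (κ / 2) ∪ Bx).card + Bz.card := Finset.card_union_le _ _
      _ ≤ (sepSet a τ ν x z (κ / 2)).card + Bx.card + Bz.card := by
          have := Finset.card_union_le (sepSet a τ ν x z (κ / 2)) Bx
          omega
  have : (sepSet a τ ν x' z' κ).card ≤ (sepSet a τ ν x z (κ / 2)).card + 2 * N := by omega
  push_cast
  push_cast at this
  linarith
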